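/- Let X be a non-discrete locally compact, totally disconnected Hausdorff space with a basis of compact open sets. Assume there exist a non-isolated point x ∈ X and a decreasing sequence (U_n)_{n≥1} of compact open neighbourhoods of x with U_{n+1} ⊆ U_n for all n and ⋂_{n≥1} U_n = {x}. Let A be a Hausdorff topological abelian group admitting a sequence (a_n)_{n≥1} in A \ {0} with a_n → 0. Then the canonical comparison map Φ_X : C_c(X, ℤ) ⊗_ℤ A → C_c(X, A) is not surjective. (Corollary 3.2.7.) -/

import Mathlib

open scoped CompactlySupported
open Set Function

variable (X A : Type*) [TopologicalSpace X]
  [AddCommGroup A] [TopologicalSpace A] [IsTopologicalAddGroup A]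

/-- The bilinear map `(f, a) ↦ (x ↦ f x • a)` from `C_c(X, ℤ) × A` to `C_c(X, A)`. -/
noncomputable def ccSmulBilin :
    C_c(X, ℤ) →ₗ[ℤ] A →ₗ[ℤ] C_c(X, A) where
  toFun f :=
    { toFun := fun a =>
        { toFun := fun x => f x • a
          continuous_toFun := by
            exact (continuous_of_discreteTopology (f := fun n : ℤ => n • a)).comp f.continuous
          hasCompactSupport' := by
            have h := f.hasCompactSupport.comp_left (g := fun n : ℤ => n • a) (zero_smul ℤ a)
            exact h
      }
      map_add' := fun a b => by
        ext x
        exact smul_add (f x) a b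
      map_smul' := fun z a => by
        ext x
        exact smul_comm (f x) z a }
  map_add' f g := by
    ext a x
    exact add_smul (f x) (g x) a
  map_smul' z f := by
    ext a x
    exact mul_smul z (f x) a

/-- The canonical comparison map `Φ_X : C_c(X, ℤ) ⊗_ℤ A → C_c(X, A)`, the unique additive
map with `Φ_X (f ⊗ a) x = f x • a`. -/
noncomputable def ccComparison :
    TensorProduct ℤ C_c(X, ℤ) A →ₗ[ℤ] C_c(X, A) :=
  TensorProduct.lift (ccSmulBilin X A)

/-- **Corollary 3.2.7.** Let `X` be a non-discrete locally compact, totally disconnected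
Hausdorff space with a basis of compact open sets, admitting a non-isolated point `x`
together with a decreasing sequence `U n` of compact open neighbourhoods of `x` with
`⋂ n, U n = {x}`. Let `A` be a Hausdorff topological abelian group admitting a sequence
`a n ≠ 0` with `a n → 0`. Then the canonical comparison map
`Φ_X : C_c(X, ℤ) ⊗_ℤ A → C_c(X, A)` is not surjective. -/
theorem ccComparison_not_surjective {X A : Type*} [TopologicalSpace X]
    [LocallyCompactSpace X] [T2Space X] [TotallyDisconnectedSpace X]
    (hnotdisc : ¬ DiscreteTopology X)
    (hbasis : ∀ y : X, ∀ U : Set X, IsOpen U → y ∈ U →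
      ∃ V : Set X, IsCompact V ∧ IsOpen V ∧ y ∈ V ∧ V ⊆ U)
    (x : X) (hx : ¬ IsOpen ({x} : Set X))
    (U : ℕ → Set X)
    (hUco : ∀ n, IsCompact (U n) ∧ IsOpen (U n))
    (hUx : ∀ n, x ∈ U n)
    (hUdec : ∀ n, U (n + 1) ⊆ U n)
    (hUinter : ⋂ n, U n = {x})
    [AddCommGroup A] [TopologicalSpace A] [IsTopologicalAddGroup A] [T2Space A]
    (a : ℕ → A) (ha : ∀ n, a n ≠ 0)
    (hlim : Filter.Tendsto a Filter.atTop (nhds 0)) :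
    ¬ Function.Surjective (ccComparison X A) := by
  classical
  intro hsurj
  -- `U` is antitone
  have hanti : ∀ {m n : ℕ}, m ≤ n → U n ⊆ U m := by
    intro m n h
    induction h with
    | refl => exact subset_rfl
    | step h ih => exact (hUdec _).trans ih
  have hclosed : ∀ n, IsClosed (U n) := fun n => (hUco n).1.isClosed
  -- the "bad" function
  set gf : X → A := fun y =>
    if h : ∃ n, y ∉ U n then (if y ∈ U 0 then a (Nat.find h - 1) else 0) else 0 with hgfdef
  have hg0 : ∀ y, y ∉ U 0 → gf y = 0 := by
    intro y hy
    by_cases h : ∃ n, y ∉ U n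
    · simp only [hgfdef]; rw [dif_pos h, if_neg hy]
    · simp only [hgfdef]; rw [dif_neg h]
  have hgx : gf x = 0 := by
    simp only [hgfdef]
    rw [dif_neg]
    push_neg
    exact hUx
  have hgd : ∀ n y, y ∈ U n → y ∉ U (n + 1) → gf y = a n := by
    intro n y hy hy'
    have hex : ∃ m, y ∉ U m := ⟨n + 1, hy'⟩
    have hfind : Nat.find hex = n + 1 := by
      rw [Nat.find_eq_iff]
      refine ⟨hy', fun m hm hmem => hmem (hanti (Nat.lt_succ_iff.mp hm) hy)⟩
    have hy0 : y ∈ U 0 := hanti (Nat.zero_le n) hy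
    simp only [hgfdef]
    rw [dif_pos hex, if_pos hy0, hfind]
    congr 1
  have hexistd : ∀ (N : ℕ) (y : X), y ∈ U N → y ≠ x → ∃ n, N ≤ n ∧ y ∈ U n ∧ y ∉ U (n + 1) := by
    intro N y hy hyx
    have : y ∉ ⋂ n, U n := by
      rw [hUinter]; exact fun h => hyx h
    have hex : ∃ m, y ∉ U m := by
      by_contra h
      push_neg at h
      exact this (Set.mem_iInter.mpr h)
    have hks : y ∉ U (Nat.find hex) := Nat.find_spec hex
    have hkN : N < Nat.find hex := by
      by_contra h
      push_neg at h
      exact hks (hanti h hy)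
    refine ⟨Nat.find hex - 1, by omega, ?_, ?_⟩
    · have hmin := Nat.find_min hex (show Nat.find hex - 1 < Nat.find hex by omega)
      by_contra h
      exact hmin h
    · have heq : Nat.find hex - 1 + 1 = Nat.find hex := by omega
      rw [heq]
      exact hks
  -- continuity of gf
  have hcont : Continuous gf := by
    rw [continuous_iff_continuousAt]
    intro y
    by_cases hyx : y = x
    · subst hyx
      have : Filter.Tendsto gf (nhds y) (nhds 0) := by
        rw [Filter.tendsto_def]
        intro W hW
        have h1 : a ⁻¹' W ∈ Filter.atTop := Filter.tendsto_def.mp hlim W hW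
        obtain ⟨N, hN⟩ := Filter.mem_atTop_sets.mp h1
        refine Filter.mem_of_superset ((hUco N).2.mem_nhds (hUx N)) ?_
        intro z hz
        by_cases hzx : z = y
        · subst hzx
          simpa [hgx] using mem_of_mem_nhds hW
        · obtain ⟨n, hnN, hzn, hzn'⟩ := hexistd N z hz hzx
          have : gf z = a n := hgd n z hzn hzn'
          simpa [this] using hN n hnN
      simpa [ContinuousAt, hgx] using this
    · by_cases hy0 : y ∈ U 0
      · obtain ⟨n, _, hyn, hyn'⟩ := hexistd 0 y hy0 hyx
        have hopen : IsOpen (U n \ U (n + 1)) := (hUco n).2.sdiff (hclosed (n + 1))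
        have heq : (fun _ : X => a n) =ᶠ[nhds y] gf := by
          refine Filter.eventually_of_mem (hopen.mem_nhds ⟨hyn, hyn'⟩) ?_
          intro z hz
          exact (hgd n z hz.1 hz.2).symm
        exact continuousAt_const.congr heq
      · have heq : (fun _ : X => (0 : A)) =ᶠ[nhds y] gf := by
          refine Filter.eventually_of_mem ((hclosed 0).isOpen_compl.mem_nhds hy0) ?_
          intro z hz
          exact (hg0 z hz).symm
        exact continuousAt_const.congr heq
  have hcs : HasCompactSupport gf := HasCompactSupport.intro (hUco 0).1 hg0
  set G : C_c(X, A) := ⟨⟨gf, hcont⟩, hcs⟩ with hGdef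
  obtain ⟨t, ht⟩ := hsurj G
  -- every function in the range of the comparison map has finite range
  have hrangeZ : ∀ f : C_c(X, ℤ), (Set.range (f : X → ℤ)).Finite := by
    intro f
    have h1 : (f '' tsupport f).Finite :=
      (f.hasCompactSupport.image f.continuous).finite_of_discrete
    refine (h1.insert 0).subset ?_
    rintro _ ⟨y, rfl⟩
    by_cases h : f y = 0
    · exact Or.inl h
    · exact Or.inr ⟨y, subset_closure h, rfl⟩
  have hfin : ∀ s : TensorProduct ℤ C_c(X, ℤ) A,
      (Set.range ((ccComparison X A s) : X → A)).Finite := by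
    intro s
    induction s using TensorProduct.induction_on with
    | zero =>
      rw [map_zero]
      refine (Set.finite_singleton (0 : A)).subset ?_
      rintro _ ⟨y, rfl⟩
      simp
    | tmul f b =>
      refine ((hrangeZ f).image (fun n : ℤ => n • b)).subset ?_
      rintro _ ⟨y, rfl⟩
      exact ⟨f y, ⟨y, rfl⟩, rfl⟩
    | add t1 t2 ih1 ih2 =>
      rw [map_add]
      refine (Set.Finite.image2 (· + ·) ih1 ih2).subset ?_
      rintro _ ⟨y, rfl⟩
      exact ⟨_, ⟨y, rfl⟩, _, ⟨y, rfl⟩, rfl⟩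
  have hfinG : (Set.range gf).Finite := by
    have := hfin t
    rw [ht] at this
    exact this
  -- the set of levels where U drops is infinite
  set S : Set ℕ := {n | ∃ y, y ∈ U n ∧ y ∉ U (n + 1)} with hSdef
  have hS : S.Infinite := by
    intro hSfin
    obtain ⟨N, hN⟩ := hSfin.bddAbove
    have hstep : ∀ k, U (N + 1 + k) = U (N + 1) := by
      intro k
      induction k with
      | zero => rfl
      | succ k ih =>
        have hnot : N + 1 + k ∉ S := fun h => by
          have := hN h
          omega
        have h1 : U (N + 1 + k) ⊆ U (N + 1 + k + 1) := by
          intro y hy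
          by_contra h
          exact hnot ⟨y, hy, h⟩
        have h2 : U (N + 1 + k + 1) ⊆ U (N + 1 + k) := hUdec _
        rw [show N + 1 + (k + 1) = N + 1 + k + 1 by omega]
        rw [Set.Subset.antisymm h2 h1, ih]
    have hsub : U (N + 1) ⊆ ⋂ n, U n := by
      intro y hy
      rw [Set.mem_iInter]
      intro n
      rcases le_or_gt n (N + 1) with h | h
      · exact hanti h hy
      · have : U n = U (N + 1) := by
          have := hstep (n - (N + 1))
          rwa [show N + 1 + (n - (N + 1)) = n by omega] at this
        rw [this]; exact hy
    have heq : U (N + 1) = {x} := by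
      apply Set.Subset.antisymm
      · rw [← hUinter]; exact hsub
      · intro y hy
        rw [Set.mem_singleton_iff] at hy
        subst hy
        exact hUx (N + 1)
    exact hx (heq ▸ (hUco (N + 1)).2)
  -- values of a over S land in the range of gf
  have hval : a '' S ⊆ Set.range gf := by
    rintro _ ⟨n, ⟨y, hy, hy'⟩, rfl⟩
    exact ⟨y, hgd n y hy hy'⟩
  have himgfin : (a '' S).Finite := hfinG.subset hval
  -- pigeonhole: some value of a is attained on an infinite set of indices
  have hpigeon : ∃ v ∈ a '' S, {n | n ∈ S ∧ a n = v}.Infinite := by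
    by_contra h
    push_neg at h
    have hfibers : ∀ v ∈ a '' S, {n | n ∈ S ∧ a n = v}.Finite := by
      intro v hv
      rw [← Set.not_infinite]
      exact Set.not_infinite.mpr (h v hv)
    have : S ⊆ ⋃ v ∈ a '' S, {n | n ∈ S ∧ a n = v} := by
      intro n hn
      exact Set.mem_biUnion ⟨n, hn, rfl⟩ ⟨hn, rfl⟩
    exact hS ((himgfin.biUnion hfibers).subset this)
  obtain ⟨v, ⟨n0, _, rfl⟩, hfib⟩ := hpigeon
  -- contradiction with a → 0 and a n0 ≠ 0 in a T2 space
  obtain ⟨Wv, W0, hWvo, hW0o, hvW, h0W, hdisj⟩ := t2_separation (ha n0)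
  have h1 : a ⁻¹' W0 ∈ Filter.atTop := Filter.tendsto_def.mp hlim W0 (hW0o.mem_nhds h0W)
  obtain ⟨N, hN⟩ := Filter.mem_atTop_sets.mp h1
  obtain ⟨m, hm, hmN⟩ := hfib.exists_gt N
  have hmW0 : a m ∈ W0 := hN m (le_of_lt hmN)
  have hmWv : a m ∈ Wv := by rw [hm.2]; exact hvW
  exact (Set.disjoint_iff.mp hdisj ⟨hmWv, hmW0⟩)
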